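/- Let X be a countable set and k : X × X → ℝ a kernel with 0 ≤ k(x,y) ≤ k₀ for some uniform bound k₀, and suppose there exists N such that each row and each column of k has at most N nonzero entries. Let Y ⊆ X be finite and let j be a nonnegative kernel on Y × Y with j(x,y) ≤ k(x,y) for all (x,y) ∈ Y × Y. Then the spectral radius of the matrix J defined by j on ℓ(Y) is at most the spectral radius of the operator K on ℓ²(X) defined by k. -/

import Mathlib

set_option synthInstance.maxHeartbeats 1000000
set_option maxHeartbeats 2000000

open scoped ENNReal Classical

/-! ### Auxiliary machinery -/

abbrev WieBX (X : Type*) := lp (fun _ : X => ℝ) 2 →L[ℝ] lp (fun _ : X => ℝ) 2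

noncomputable def wieEvalCLM {X : Type*} (x : X) : lp (fun _ : X => ℝ) 2 →L[ℝ] ℝ :=
  LinearMap.mkContinuous
    { toFun := fun f => f x
      map_add' := fun _ _ => rfl
      map_smul' := fun _ _ => rfl }
    1 (fun f => by rw [one_mul]; exact lp.norm_apply_le_norm two_ne_zero f x)

@[simp] lemma wieEvalCLM_apply {X : Type*} (x : X) (f : lp (fun _ : X => ℝ) 2) :
    wieEvalCLM x f = f x := rfl

/-- Positivity (preservation of pointwise-nonnegative vectors) for operators on `ℓ²`. -/
def WiePos {X : Type*} (T : WieBX X) : Prop :=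
  ∀ f : lp (fun _ : X => ℝ) 2, (∀ x, 0 ≤ f x) → ∀ x, 0 ≤ (T f) x

namespace WiePos
variable {X : Type*} {S T : WieBX X}

lemma zero : WiePos (0 : WieBX X) := by intro f hf x; simp

lemma one : WiePos (1 : WieBX X) := by intro f hf x; simpa using hf x

lemma add (hS : WiePos S) (hT : WiePos T) : WiePos (S + T) := by
  intro f hf x
  have := add_nonneg (hS f hf x) (hT f hf x)
  simpa [lp.coeFn_add] using this

lemma mul (hS : WiePos S) (hT : WiePos T) : WiePos (S * T) := by
  intro f hf x
  exact hS (T f) (hT f hf) x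

lemma smul {c : ℝ} (hc : 0 ≤ c) (hT : WiePos T) : WiePos (c • T) := by
  intro f hf x
  have := mul_nonneg hc (hT f hf x)
  simpa [lp.coeFn_smul] using this

lemma pow (hT : WiePos T) (n : ℕ) : WiePos (T ^ n) := by
  induction n with
  | zero => simpa using one
  | succ n ih => rw [pow_succ]; exact ih.mul hT

lemma sum {ι : Type*} (s : Finset ι) (F : ι → WieBX X)
    (h : ∀ i ∈ s, WiePos (F i)) : WiePos (∑ i ∈ s, F i) :=
  Finset.sum_induction F WiePos (fun _ _ ha hb => ha.add hb) zero h

lemma of_tendsto {ι : Type*} {l : Filter ι} [l.NeBot]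
    {F : ι → WieBX X}
    (hT : Filter.Tendsto F l (nhds T)) (h : ∀ᶠ i in l, WiePos (F i)) : WiePos T := by
  intro f hf x
  have h1 : Filter.Tendsto (fun i => ((F i) f) x) l (nhds ((T f) x)) := by
    have h2 : Filter.Tendsto (fun i => (F i) f) l (nhds (T f)) :=
      ((ContinuousLinearMap.apply ℝ (lp (fun _ : X => ℝ) 2) f).continuous.tendsto _).comp hT
    exact ((wieEvalCLM x).continuous.tendsto _).comp h2
  refine ge_of_tendsto h1 ?_
  filter_upwards [h] with i hi
  exact hi f hf x

lemma of_hasSum {F : ℕ → WieBX X}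
    (hs : HasSum F T) (h : ∀ n, WiePos (F n)) : WiePos T :=
  of_tendsto hs (Filter.Eventually.of_forall fun s => sum s F fun i _ => h i)

end WiePos

section resolvent
variable {X : Type*} (K : WieBX X)

lemma wie_pos_inverse_of_big (hKpos : WiePos K) {s : ℝ} (hs : ‖K‖ < s) :
    IsUnit (algebraMap ℝ (WieBX X) s - K) ∧
      WiePos (Ring.inverse (algebraMap ℝ (WieBX X) s - K)) := by
  have hs0 : 0 < s := lt_of_le_of_lt (norm_nonneg K) hs
  have hxn : ‖s⁻¹ • K‖ < 1 := by
    rw [norm_smul s⁻¹ K, Real.norm_eq_abs, abs_of_pos (inv_pos.mpr hs0)]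
    rw [inv_mul_lt_iff₀ hs0, mul_one]
    exact hs
  have hsum : Summable (fun n => (s⁻¹ • K) ^ n) := summable_geometric_of_norm_lt_one hxn
  have hval : algebraMap ℝ (WieBX X) s - K = s • ((1 : WieBX X) - s⁻¹ • K) := by
    rw [smul_sub, smul_smul, mul_inv_cancel₀ hs0.ne', one_smul,
      Algebra.algebraMap_eq_smul_one]
  have h1 : (algebraMap ℝ (WieBX X) s - K) * (s⁻¹ • ∑' n, (s⁻¹ • K) ^ n) = 1 := by
    rw [hval, smul_mul_smul_comm, mul_inv_cancel₀ hs0.ne',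
      mul_neg_geom_series _ hxn, one_smul]
  have h2 : (s⁻¹ • ∑' n, (s⁻¹ • K) ^ n) * (algebraMap ℝ (WieBX X) s - K) = 1 := by
    rw [hval, smul_mul_smul_comm, inv_mul_cancel₀ hs0.ne',
      geom_series_mul_neg _ hxn, one_smul]
  let u : (WieBX X)ˣ := ⟨algebraMap ℝ (WieBX X) s - K, s⁻¹ • ∑' n, (s⁻¹ • K) ^ n, h1, h2⟩
  refine ⟨⟨u, rfl⟩, ?_⟩
  have hinv : Ring.inverse (algebraMap ℝ (WieBX X) s - K)
      = s⁻¹ • ∑' n, (s⁻¹ • K) ^ n := Ring.inverse_unit u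
  rw [hinv]
  refine WiePos.smul (inv_nonneg.mpr hs0.le) (WiePos.of_hasSum hsum.hasSum fun n => ?_)
  rw [smul_pow]
  exact WiePos.smul (pow_nonneg (inv_nonneg.mpr hs0.le) n) (hKpos.pow n)

lemma wie_pos_inverse_step (hKpos : WiePos K) {s s' : ℝ} (hss : s' ≤ s)
    (hu : IsUnit (algebraMap ℝ (WieBX X) s - K))
    (hpos : WiePos (Ring.inverse (algebraMap ℝ (WieBX X) s - K)))
    (hlt : (s - s') * ‖Ring.inverse (algebraMap ℝ (WieBX X) s - K)‖ < 1) :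
    IsUnit (algebraMap ℝ (WieBX X) s' - K) ∧
      WiePos (Ring.inverse (algebraMap ℝ (WieBX X) s' - K)) := by
  set u := algebraMap ℝ (WieBX X) s - K with hu_def
  set P := Ring.inverse u with hP_def
  have hc : 0 ≤ s - s' := sub_nonneg.mpr hss
  have hxn : ‖(s - s') • P‖ < 1 := by
    rw [norm_smul (s - s') P, Real.norm_eq_abs, abs_of_nonneg hc]; exact hlt
  have hsum : Summable (fun n => ((s - s') • P) ^ n) := summable_geometric_of_norm_lt_one hxn
  have hval : algebraMap ℝ (WieBX X) s' - K = u * ((1 : WieBX X) - (s - s') • P) := by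
    have h3 : u * ((s - s') • P) = (s - s') • (1 : WieBX X) := by
      rw [mul_smul_comm, Ring.mul_inverse_cancel u hu]
    rw [mul_sub, mul_one, h3, hu_def, Algebra.algebraMap_eq_smul_one,
      Algebra.algebraMap_eq_smul_one, sub_smul]
    abel
  have hg1 : ((1 : WieBX X) - (s - s') • P) * (∑' n, ((s - s') • P) ^ n) = 1 :=
    mul_neg_geom_series _ hxn
  have hg2 : (∑' n, ((s - s') • P) ^ n) * ((1 : WieBX X) - (s - s') • P) = 1 :=
    geom_series_mul_neg _ hxn
  have h1 : (algebraMap ℝ (WieBX X) s' - K) * ((∑' n, ((s - s') • P) ^ n) * P) = 1 := by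
    rw [hval, mul_assoc, ← mul_assoc ((1 : WieBX X) - (s - s') • P), hg1, one_mul,
      Ring.mul_inverse_cancel u hu]
  have h2 : ((∑' n, ((s - s') • P) ^ n) * P) * (algebraMap ℝ (WieBX X) s' - K) = 1 := by
    rw [hval, mul_assoc, ← mul_assoc P, Ring.inverse_mul_cancel u hu, one_mul, hg2]
  let u' : (WieBX X)ˣ := ⟨algebraMap ℝ (WieBX X) s' - K, (∑' n, ((s - s') • P) ^ n) * P, h1, h2⟩
  refine ⟨⟨u', rfl⟩, ?_⟩
  have hinv : Ring.inverse (algebraMap ℝ (WieBX X) s' - K)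
      = (∑' n, ((s - s') • P) ^ n) * P := Ring.inverse_unit u'
  rw [hinv]
  refine WiePos.mul (WiePos.of_hasSum hsum.hasSum fun n => ?_) hpos
  rw [smul_pow]
  exact WiePos.smul (pow_nonneg hc n) (hpos.pow n)

lemma wie_pos_inverse_ray (hKpos : WiePos K) {t₀ : ℝ}
    (hinv : ∀ s : ℝ, t₀ ≤ s → IsUnit (algebraMap ℝ (WieBX X) s - K)) :
    ∀ s : ℝ, t₀ ≤ s → WiePos (Ring.inverse (algebraMap ℝ (WieBX X) s - K)) := by
  set c := max t₀ (‖K‖ + 1) with hc_def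
  have htc : t₀ ≤ c := le_max_left _ _
  have hKc : ‖K‖ < c := lt_of_lt_of_le (lt_add_one ‖K‖) (le_max_right _ _)
  have hcont : ContinuousOn (fun s : ℝ => Ring.inverse (algebraMap ℝ (WieBX X) s - K))
      (Set.Icc t₀ c) := by
    intro s hs
    obtain ⟨u, hu⟩ := hinv s hs.1
    have haff : Continuous (fun s : ℝ => algebraMap ℝ (WieBX X) s - K) :=
      (continuous_algebraMap ℝ _).sub continuous_const
    have hca : ContinuousAt Ring.inverse (algebraMap ℝ (WieBX X) s - K) := by
      rw [← hu]; exact NormedRing.inverse_continuousAt u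
    have hcomp := ContinuousAt.comp (f := fun s : ℝ => algebraMap ℝ (WieBX X) s - K) hca
      haff.continuousAt
    exact hcomp.continuousWithinAt
  obtain ⟨C, hC⟩ := (isCompact_Icc (a := t₀) (b := c)).exists_bound_of_continuousOn hcont
  have hC0 : 0 ≤ C := le_trans (norm_nonneg _) (hC t₀ ⟨le_refl _, htc⟩)
  set δ := (2 * (C + 1))⁻¹ with hδ_def
  have hδ : 0 < δ := by positivity
  have hδC : δ * C < 1 := by
    have h2C : (0:ℝ) < 2 * (C + 1) := by linarith
    have : δ * (2 * (C + 1)) = 1 := inv_mul_cancel₀ h2C.ne'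
    nlinarith [mul_pos hδ (show (0:ℝ) < C + 2 by linarith)]
  have main : ∀ n : ℕ, ∀ s : ℝ, s ∈ Set.Icc t₀ c → c - s ≤ n * δ →
      WiePos (Ring.inverse (algebraMap ℝ (WieBX X) s - K)) := by
    intro n
    induction n with
    | zero =>
      intro s hs hle
      have hsc : s = c := le_antisymm hs.2 (by simpa using hle)
      subst hsc
      exact (wie_pos_inverse_of_big K hKpos hKc).2
    | succ n ih =>
      intro s hs hle
      by_cases h : c - s ≤ n * δ
      · exact ih s hs h
      push_neg at h
      set s₁ := min c (s + δ) with hs₁_def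
      have hts₁ : t₀ ≤ s₁ := le_min htc (by linarith [hs.1, hδ.le])
      have hs₁c : s₁ ≤ c := min_le_left _ _
      have hcs₁ : c - s₁ ≤ n * δ := by
        have h1 : c - n * δ ≤ c := by
          have : (0:ℝ) ≤ n * δ := by positivity
          linarith
        have h2 : c - n * δ ≤ s + δ := by
          have h3 : c - s ≤ (n + 1) * δ := by
            have := hle
            push_cast at this ⊢
            linarith
          linarith
        have := le_min h1 h2
        rw [← hs₁_def] at this
        linarith
      have hP₁ := ih s₁ ⟨hts₁, hs₁c⟩ hcs₁
      have hss₁ : s ≤ s₁ := le_min hs.2 (by linarith [hδ.le])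
      have hbound : (s₁ - s) * ‖Ring.inverse (algebraMap ℝ (WieBX X) s₁ - K)‖ < 1 := by
        have h1 : s₁ - s ≤ δ := by
          have : s₁ ≤ s + δ := min_le_right _ _
          linarith
        have h2 : ‖Ring.inverse (algebraMap ℝ (WieBX X) s₁ - K)‖ ≤ C := hC s₁ ⟨hts₁, hs₁c⟩
        calc (s₁ - s) * ‖Ring.inverse (algebraMap ℝ (WieBX X) s₁ - K)‖
            ≤ δ * C := by
              apply mul_le_mul h1 h2 (norm_nonneg _) hδ.le
          _ < 1 := hδC
      exact (wie_pos_inverse_step K hKpos hss₁ (hinv s₁ hts₁) hP₁ hbound).2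
  intro s hts
  by_cases hsc : s ≤ c
  · refine main ⌈(c - t₀) / δ⌉₊ s ⟨hts, hsc⟩ ?_
    have h1 : (c - t₀) / δ ≤ (⌈(c - t₀) / δ⌉₊ : ℝ) := Nat.le_ceil _
    have h2 : c - t₀ ≤ (⌈(c - t₀) / δ⌉₊ : ℝ) * δ := by
      rw [div_le_iff₀ hδ] at h1
      linarith
    linarith
  · push_neg at hsc
    exact (wie_pos_inverse_of_big K hKpos (by linarith)).2

end resolvent

/-! ### lp singles and pointwise operator application -/

lemma wie_single_eval {X : Type*} (i x : X) :
    (lp.single 2 i (1:ℝ) : lp (fun _ : X => ℝ) 2) x = if x = i then 1 else 0 := by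
  rw [lp.single_apply]
  split
  · next h => subst h; simp
  · next h => simp [Pi.single_apply, h]

lemma wie_single_nonneg {X : Type*} (i x : X) :
    0 ≤ (lp.single 2 i (1:ℝ) : lp (fun _ : X => ℝ) 2) x := by
  rw [wie_single_eval]; split <;> norm_num

lemma wie_norm_single {X : Type*} (i : X) :
    ‖(lp.single 2 i (1:ℝ) : lp (fun _ : X => ℝ) 2)‖ ≤ 1 := by
  have := lp.norm_single (p := 2) (E := fun _ : X => ℝ) (by norm_num) i (1:ℝ)
  simp at this
  simp [this]

lemma wie_apply_add {X : Type*} (S T : WieBX X) (f : lp (fun _ : X => ℝ) 2) (x : X) :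
    ((S + T) f) x = (S f) x + (T f) x := by
  rw [ContinuousLinearMap.add_apply, lp.coeFn_add, Pi.add_apply]

lemma wie_apply_smul {X : Type*} (c : ℝ) (T : WieBX X) (f : lp (fun _ : X => ℝ) 2) (x : X) :
    ((c • T) f) x = c * (T f) x := by
  rw [ContinuousLinearMap.smul_apply, lp.coeFn_smul, Pi.smul_apply, smul_eq_mul]

lemma wie_apply_sum {X ι : Type*} (s : Finset ι) (F : ι → WieBX X)
    (f : lp (fun _ : X => ℝ) 2) (x : X) :
    ((∑ i ∈ s, F i) f) x = ∑ i ∈ s, ((F i) f) x := by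
  classical
  induction s using Finset.induction_on with
  | empty => simp
  | insert _ _ hni ih =>
    rw [Finset.sum_insert hni, Finset.sum_insert hni, wie_apply_add, ih]

/-! ### Matrix operator norm bound -/

lemma wie_euclid_apply {n : Type*} [Fintype n] [DecidableEq n] (A : Matrix n n ℝ)
    (v : EuclideanSpace ℝ n) (a : n) :
    (Matrix.toEuclideanCLM (𝕜 := ℝ) A v) a = ∑ b, A a b * v b := rfl

lemma wie_matrix_opnorm_le {n : Type*} [Fintype n] [DecidableEq n] (A : Matrix n n ℝ) {β : ℝ}
    (hβ : 0 ≤ β) (h : ∀ a b, |A a b| ≤ β) :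
    ‖Matrix.toEuclideanCLM (𝕜 := ℝ) A‖ ≤ (Fintype.card n)^2 * β := by
  refine ContinuousLinearMap.opNorm_le_bound _ (by positivity) (fun v => ?_)
  set c := (Fintype.card n : ℝ) with hc
  have hc0 : 0 ≤ c := by positivity
  have hcoord : ∀ b, |v b| ≤ ‖v‖ := by
    intro b
    rw [← Real.sqrt_sq_eq_abs, EuclideanSpace.norm_eq]
    apply Real.sqrt_le_sqrt
    have := Finset.single_le_sum (f := fun i => ‖v i‖ ^ 2)
      (fun i _ => by positivity) (Finset.mem_univ b)
    simpa [Real.norm_eq_abs, sq_abs] using this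
  have hTv : ∀ a, |(Matrix.toEuclideanCLM (𝕜 := ℝ) A v) a| ≤ β * c * ‖v‖ := by
    intro a
    rw [wie_euclid_apply]
    calc |∑ b, A a b * v b| ≤ ∑ b, |A a b * v b| := Finset.abs_sum_le_sum_abs _ _
      _ ≤ ∑ _b : n, β * ‖v‖ := by
          apply Finset.sum_le_sum
          intro b _
          rw [abs_mul]
          exact mul_le_mul (h a b) (hcoord b) (abs_nonneg _) hβ
      _ = β * c * ‖v‖ := by
          rw [Finset.sum_const, Finset.card_univ, nsmul_eq_mul]
          ring
  have hnorm : ‖Matrix.toEuclideanCLM (𝕜 := ℝ) A v‖ ≤ c ^ 2 * β * ‖v‖ := by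
    rw [EuclideanSpace.norm_eq]
    have hsum : ∑ a, ‖(Matrix.toEuclideanCLM (𝕜 := ℝ) A v) a‖ ^ 2
        ≤ (c ^ 2 * β * ‖v‖) ^ 2 := by
      calc ∑ a, ‖(Matrix.toEuclideanCLM (𝕜 := ℝ) A v) a‖ ^ 2
          ≤ ∑ _a : n, (β * c * ‖v‖) ^ 2 := by
            apply Finset.sum_le_sum
            intro a _
            rw [Real.norm_eq_abs]
            have h1 := hTv a
            have h2 : (0:ℝ) ≤ β * c * ‖v‖ := by positivity
            nlinarith [abs_nonneg ((Matrix.toEuclideanCLM (𝕜 := ℝ) A v) a)]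
        _ = c * (β * c * ‖v‖) ^ 2 := by
            rw [Finset.sum_const, Finset.card_univ, nsmul_eq_mul]
        _ ≤ (c ^ 2 * β * ‖v‖) ^ 2 := by
            have hcc : c ≤ c ^ 2 := by
              rcases Nat.eq_zero_or_pos (Fintype.card n) with h0 | h1
              · simp [hc, h0]
              · have : (1:ℝ) ≤ c := by rw [hc]; exact_mod_cast h1
                nlinarith
            nlinarith [norm_nonneg v, mul_nonneg (mul_nonneg hβ hc0) (norm_nonneg v),
              sq_nonneg (β * c * ‖v‖)]
    calc Real.sqrt (∑ a, ‖(Matrix.toEuclideanCLM (𝕜 := ℝ) A v) a‖ ^ 2)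
        ≤ Real.sqrt ((c ^ 2 * β * ‖v‖) ^ 2) := Real.sqrt_le_sqrt hsum
      _ = c ^ 2 * β * ‖v‖ := Real.sqrt_sq (by positivity)
  simpa [hc] using hnorm

/-- Generalized Wielandt theorem: a nonnegative finite submatrix dominated by a
nonnegative kernel has spectral radius at most that of the kernel operator. -/
theorem generalized_wielandt
    (X : Type*) [Countable X]
    (k : X → X → ℝ) (k₀ : ℝ)
    (hk : ∀ x y, 0 ≤ k x y ∧ k x y ≤ k₀)
    (N : ℕ)
    (hrow : ∀ x : X, Set.Finite {y | k x y ≠ 0} ∧ {y | k x y ≠ 0}.ncard ≤ N)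
    (hcol : ∀ y : X, Set.Finite {x | k x y ≠ 0} ∧ {x | k x y ≠ 0}.ncard ≤ N)
    (K : lp (fun _ : X => ℝ) 2 →L[ℝ] lp (fun _ : X => ℝ) 2)
    (hK : ∀ (f : lp (fun _ : X => ℝ) 2) (x : X), (K f) x = ∑' y, k x y * f y)
    (Y : Finset X) (j : X → X → ℝ)
    (hj0 : ∀ x ∈ Y, ∀ y ∈ Y, 0 ≤ j x y)
    (hjk : ∀ x ∈ Y, ∀ y ∈ Y, j x y ≤ k x y)
    (J : Matrix Y Y ℝ) (hJ : ∀ x y : Y, J x y = j x y) :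
    spectralRadius ℝ (Matrix.toEuclideanCLM (𝕜 := ℝ) J) ≤ spectralRadius ℝ K := by
  have hKpos : WiePos K := by
    intro f hf x
    rw [hK]
    exact tsum_nonneg fun y => mul_nonneg (hk x y).1 (hf y)
  set Jop := Matrix.toEuclideanCLM (𝕜 := ℝ) J with hJop
  have key : ∀ t t' : ℝ, 0 < t → t < t' → spectralRadius ℝ K < ENNReal.ofReal t →
      spectralRadius ℝ Jop ≤ ENNReal.ofReal t' := by
    intro t t' ht htt' hst
    have ht' : 0 < t' := lt_trans ht htt'
    -- every s ≥ t is in the resolvent set of K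
    have hunit : ∀ s : ℝ, t ≤ s → IsUnit (algebraMap ℝ (WieBX X) s - K) := by
      intro s hs
      have hs0 : 0 < s := lt_of_lt_of_le ht hs
      have hns : (‖s‖₊ : ℝ≥0∞) = ENNReal.ofReal s := by
        rw [← enorm_eq_nnnorm, ← ofReal_norm, Real.norm_eq_abs, abs_of_pos hs0]
      have hlt : spectralRadius ℝ K < ‖s‖₊ := by
        rw [hns]
        exact lt_of_lt_of_le hst (ENNReal.ofReal_le_ofReal hs)
      exact spectrum.mem_resolventSet_iff.mp
        (spectrum.mem_resolventSet_of_spectralRadius_lt hlt)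
    set P := Ring.inverse (algebraMap ℝ (WieBX X) t - K) with hP
    have hPpos : WiePos P := wie_pos_inverse_ray K hKpos hunit t le_rfl
    have hPunit : IsUnit (algebraMap ℝ (WieBX X) t - K) := hunit t le_rfl
    set C := ‖P‖ with hCdef
    have hC0 : 0 ≤ C := norm_nonneg _
    -- the iterated resolvent identity
    have hbase : P = t⁻¹ • ((1 : WieBX X) + K * P) := by
      have h1 : (algebraMap ℝ (WieBX X) t - K) * P = 1 := Ring.mul_inverse_cancel _ hPunit
      rw [Algebra.algebraMap_eq_smul_one, sub_mul, smul_mul_assoc, one_mul] at h1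
      have h2 : t • P = 1 + K * P := by
        rw [← h1]; abel
      rw [← h2, smul_smul, inv_mul_cancel₀ ht.ne', one_smul]
    have hPid : ∀ n : ℕ, P = (∑ m ∈ Finset.range n, (t⁻¹)^(m+1) • K^m)
        + (t⁻¹)^n • (K^n * P) := by
      intro n
      induction n with
      | zero => simp
      | succ n ih =>
        have hstep : (t⁻¹)^n • (K^n * P)
            = (t⁻¹)^(n+1) • K^n + (t⁻¹)^(n+1) • (K^(n+1) * P) := by
          calc (t⁻¹)^n • (K^n * P)
              = (t⁻¹)^n • (K^n * (t⁻¹ • ((1 : WieBX X) + K * P))) := by rw [← hbase]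
            _ = (t⁻¹)^(n+1) • (K^n * ((1 : WieBX X) + K * P)) := by
                rw [mul_smul_comm, smul_smul, ← pow_succ]
            _ = (t⁻¹)^(n+1) • K^n + (t⁻¹)^(n+1) • (K^(n+1) * P) := by
                rw [mul_add, mul_one, smul_add, ← mul_assoc, ← pow_succ]
        rw [Finset.sum_range_succ, add_assoc, ← hstep, ← ih]
    -- entries of K^n are bounded by t^(n+1) * C
    have hent : ∀ (n : ℕ) (x y : X),
        ((K^n) (lp.single 2 y 1)) x ≤ t^(n+1) * C := by
      intro n x y
      set e := (lp.single 2 y (1:ℝ) : lp (fun _ : X => ℝ) 2) with he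
      have hepos : ∀ z, 0 ≤ e z := fun z => wie_single_nonneg y z
      have hid := hPid (n+1)
      have happ : (P e) x = (∑ m ∈ Finset.range (n+1), (t⁻¹)^(m+1) * (((K^m) e) x))
          + (t⁻¹)^(n+1) * (((K^(n+1) * P)) e) x := by
        conv_lhs => rw [hid]
        rw [wie_apply_add, wie_apply_smul, wie_apply_sum]
        simp only [wie_apply_smul]
      have hterm : ∀ m ∈ Finset.range (n+1), 0 ≤ (t⁻¹)^(m+1) * (((K^m) e) x) :=
        fun m _ => mul_nonneg (by positivity) ((hKpos.pow m) e hepos x)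
      have hlast : 0 ≤ (t⁻¹)^(n+1) * (((K^(n+1) * P)) e) x :=
        mul_nonneg (by positivity) (((hKpos.pow (n+1)).mul hPpos) e hepos x)
      have hsingle : (t⁻¹)^(n+1) * (((K^n) e) x)
          ≤ ∑ m ∈ Finset.range (n+1), (t⁻¹)^(m+1) * (((K^m) e) x) :=
        Finset.single_le_sum hterm (Finset.self_mem_range_succ n)
      have hPbound : (P e) x ≤ C := by
        have h1 : |(P e) x| ≤ ‖P e‖ := by
          simpa [Real.norm_eq_abs] using lp.norm_apply_le_norm two_ne_zero (P e) x
        have h2 : ‖P e‖ ≤ C * 1 := by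
          calc ‖P e‖ ≤ ‖P‖ * ‖e‖ := P.le_opNorm e
            _ ≤ C * 1 := by
                apply mul_le_mul le_rfl (wie_norm_single y) (norm_nonneg _) hC0
        calc (P e) x ≤ |(P e) x| := le_abs_self _
          _ ≤ C * 1 := le_trans h1 h2
          _ = C := mul_one C
      have hcomb : (t⁻¹)^(n+1) * (((K^n) e) x) ≤ C := by
        calc (t⁻¹)^(n+1) * (((K^n) e) x)
            ≤ ∑ m ∈ Finset.range (n+1), (t⁻¹)^(m+1) * (((K^m) e) x) := hsingle
          _ ≤ (P e) x := by rw [happ]; exact le_add_of_nonneg_right hlast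
          _ ≤ C := hPbound
      have ht1 : (0:ℝ) < t^(n+1) := by positivity
      have hfin := mul_le_mul_of_nonneg_left hcomb ht1.le
      rw [← mul_assoc, ← mul_pow, mul_inv_cancel₀ ht.ne', one_pow, one_mul] at hfin
      exact hfin
    -- the matrix of k on Y dominates powers of J, and is dominated by entries of K^n
    set Mk : Matrix Y Y ℝ := Matrix.of (fun a b : Y => k a b) with hMk
    have hMkap : ∀ a b : Y, Mk a b = k a b := fun a b => rfl
    have claim2 : ∀ n : ℕ, ∀ a b : Y, 0 ≤ (Mk ^ n) a b ∧
        (Mk ^ n) a b ≤ ((K^n) (lp.single 2 (b : X) 1)) (a : X) := by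
      intro n
      induction n with
      | zero =>
        intro a b
        rw [pow_zero, pow_zero, Matrix.one_apply, ContinuousLinearMap.one_apply,
          wie_single_eval]
        constructor
        · split <;> norm_num
        · by_cases hab : a = b
          · subst hab; simp
          · have hab' : (a : X) ≠ (b : X) := fun hc => hab (Subtype.ext hc)
            rw [if_neg hab, if_neg hab']
      | succ n ih =>
        intro a b
        rw [pow_succ', pow_succ', Matrix.mul_apply]
        constructor
        · exact Finset.sum_nonneg fun z _ =>
            mul_nonneg (by rw [hMkap]; exact (hk a z).1) (ih z b).1
        · have hKform : ((K * K^n) (lp.single 2 (b:X) 1)) (a:X)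
              = ∑' z : X, k a z * (((K^n) (lp.single 2 (b:X) 1)) z) := by
            rw [ContinuousLinearMap.mul_apply, hK]
          rw [hKform]
          set g : X → ℝ := fun z => k a z * (((K^n) (lp.single 2 (b:X) 1)) z) with hg
          have hgnn : ∀ z, 0 ≤ g z := fun z =>
            mul_nonneg (hk a z).1 ((hKpos.pow n) _ (fun w => wie_single_nonneg _ w) z)
          have hgsupp : ∀ z ∉ (hrow (a:X)).1.toFinset, g z = 0 := by
            intro z hz
            have hkz : k a z = 0 := by
              by_contra hne
              exact hz ((hrow (a:X)).1.mem_toFinset.mpr hne)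
            simp [hg, hkz]
          have hgsum : Summable g := summable_of_ne_finset_zero hgsupp
          calc ∑ z : Y, Mk a z * (Mk ^ n) z b
              ≤ ∑ z : Y, g z := by
                apply Finset.sum_le_sum
                intro z _
                rw [hg, hMkap]
                exact mul_le_mul_of_nonneg_left (ih z b).2 (hk a z).1
            _ = ∑ z ∈ Y, g z := Finset.sum_coe_sort Y g
            _ ≤ ∑' z, g z := sum_le_hasSum Y (fun z _ => hgnn z) hgsum.hasSum
    have claim3 : ∀ n : ℕ, ∀ a b : Y, 0 ≤ (J ^ n) a b ∧ (J ^ n) a b ≤ (Mk ^ n) a b := by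
      intro n
      induction n with
      | zero =>
        intro a b
        rw [pow_zero]
        exact ⟨by rw [Matrix.one_apply]; split <;> norm_num, le_rfl⟩
      | succ n ih =>
        intro a b
        rw [pow_succ', pow_succ', Matrix.mul_apply, Matrix.mul_apply]
        constructor
        · refine Finset.sum_nonneg fun z _ => mul_nonneg ?_ (ih z b).1
          rw [hJ]; exact hj0 a a.2 z z.2
        · refine Finset.sum_le_sum fun z _ => ?_
          have h1 : J a z ≤ Mk a z := by
            rw [hJ, hMkap]; exact hjk a a.2 z z.2
          have h2 : 0 ≤ J a z := by rw [hJ]; exact hj0 a a.2 z z.2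
          exact mul_le_mul h1 (ih z b).2 (ih z b).1 (le_trans h2 h1)
    -- norm bound on powers of Jop
    set c2 := ((Fintype.card Y : ℝ))^2 with hc2
    have hc20 : 0 ≤ c2 := by positivity
    have hnormJ : ∀ n : ℕ, ‖Jop ^ (n+1)‖ ≤ c2 * (t^(n+2) * C) := by
      intro n
      have hmap : Jop ^ (n+1) = Matrix.toEuclideanCLM (𝕜 := ℝ) (J ^ (n+1)) := by
        rw [hJop, ← map_pow]
      rw [hmap]
      have hentry : ∀ a b : Y, |(J ^ (n+1)) a b| ≤ t^(n+2) * C := by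
        intro a b
        rw [abs_of_nonneg (claim3 (n+1) a b).1]
        calc (J ^ (n+1)) a b ≤ (Mk ^ (n+1)) a b := (claim3 (n+1) a b).2
          _ ≤ ((K^(n+1)) (lp.single 2 (b:X) 1)) (a:X) := (claim2 (n+1) a b).2
          _ ≤ t^(n+2) * C := hent (n+1) a b
      have := wie_matrix_opnorm_le (J ^ (n+1)) (β := t^(n+2) * C) (by positivity) hentry
      exact this
    -- choose a large power
    have hρ0 : (0:ℝ) ≤ t/t' := by positivity
    have hρ1 : t/t' < 1 := by rw [div_lt_one ht']; exact htt'
    obtain ⟨n₀, hn₀⟩ := exists_pow_lt_of_lt_one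
      (show (0:ℝ) < 1/(c2 * C * t + 1) by positivity) hρ1
    have hmono : (t/t')^(n₀+1) ≤ (t/t')^n₀ :=
      pow_le_pow_of_le_one hρ0 hρ1.le (Nat.le_succ n₀)
    have hratio : (c2 * C * t) * (t/t')^(n₀+1) < 1 := by
      have h1 : (c2 * C * t) * (t/t')^(n₀+1) ≤ (c2 * C * t) * (t/t')^n₀ :=
        mul_le_mul_of_nonneg_left hmono (by positivity)
      have h2 : (c2 * C * t) * (t/t')^n₀ ≤ (c2 * C * t) * (1/(c2 * C * t + 1)) :=
        mul_le_mul_of_nonneg_left hn₀.le (by positivity)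
      have h3 : (c2 * C * t) * (1/(c2 * C * t + 1)) < 1 := by
        rw [mul_one_div, div_lt_one (by positivity)]
        linarith
      linarith
    have hfinR : c2 * (t^(n₀+2) * C) ≤ t'^(n₀+1) := by
      have hpos' : (0:ℝ) < t'^(n₀+1) := by positivity
      rw [div_pow, ← mul_div_assoc, div_lt_one hpos'] at hratio
      have h5 : c2 * (t^(n₀+2) * C) = (c2 * C * t) * t^(n₀+1) := by
        rw [pow_succ]; ring
      linarith
    -- final spectral radius estimate
    have hspec := spectrum.spectralRadius_le_pow_nnnorm_pow_one_div ℝ Jop n₀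
    have hone : (‖(1 : EuclideanSpace ℝ Y →L[ℝ] EuclideanSpace ℝ Y)‖₊ : ℝ≥0∞) ≤ 1 := by
      have h1 : ‖(1 : EuclideanSpace ℝ Y →L[ℝ] EuclideanSpace ℝ Y)‖ ≤ 1 := by
        rw [ContinuousLinearMap.one_def]; exact ContinuousLinearMap.norm_id_le
      have h2 : ‖(1 : EuclideanSpace ℝ Y →L[ℝ] EuclideanSpace ℝ Y)‖₊ ≤ 1 := by
        exact_mod_cast h1
      exact_mod_cast h2
    have hfac2 : ((‖(1 : EuclideanSpace ℝ Y →L[ℝ] EuclideanSpace ℝ Y)‖₊ : ℝ≥0∞))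
        ^ (1/((n₀:ℝ)+1)) ≤ 1 := ENNReal.rpow_le_one hone (by positivity)
    have hfac1 : ((‖Jop ^ (n₀+1)‖₊ : ℝ≥0∞)) ^ (1/((n₀:ℝ)+1)) ≤ ENNReal.ofReal t' := by
      have hn1 : (‖Jop ^ (n₀+1)‖₊ : ℝ≥0∞) ≤ ENNReal.ofReal (t'^(n₀+1)) := by
        rw [← enorm_eq_nnnorm, ← ofReal_norm]
        exact ENNReal.ofReal_le_ofReal (le_trans (hnormJ n₀) hfinR)
      have h2 := ENNReal.rpow_le_rpow hn1 (show (0:ℝ) ≤ 1/((n₀:ℝ)+1) by positivity)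
      refine le_trans h2 (le_of_eq ?_)
      rw [ENNReal.ofReal_pow ht'.le,
        ← ENNReal.rpow_natCast (ENNReal.ofReal t') (n₀+1), ← ENNReal.rpow_mul]
      push_cast
      rw [mul_one_div, div_self (by positivity : ((n₀:ℝ)+1) ≠ 0), ENNReal.rpow_one]
    calc spectralRadius ℝ Jop
        ≤ ((‖Jop ^ (n₀+1)‖₊ : ℝ≥0∞)) ^ (1/((n₀:ℝ)+1))
          * ((‖(1 : EuclideanSpace ℝ Y →L[ℝ] EuclideanSpace ℝ Y)‖₊ : ℝ≥0∞))
            ^ (1/((n₀:ℝ)+1)) := hspec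
      _ ≤ ENNReal.ofReal t' * 1 := mul_le_mul' hfac1 hfac2
      _ = ENNReal.ofReal t' := mul_one _
  -- conclude from `key`
  by_contra hcon
  push_neg at hcon
  obtain ⟨q, hq1, hq2⟩ := exists_between hcon
  obtain ⟨q', hq3, hq4⟩ := exists_between hq2
  have hqtop : q ≠ ⊤ := ne_top_of_lt hq3
  have hq'top : q' ≠ ⊤ := ne_top_of_lt hq4
  have hq0 : q ≠ 0 := by
    intro h0
    rw [h0] at hq1
    exact (not_lt_of_ge (zero_le (a := spectralRadius ℝ K))) hq1
  have ht0 : 0 < q.toReal := ENNReal.toReal_pos hq0 hqtop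
  have htt' : q.toReal < q'.toReal := (ENNReal.toReal_lt_toReal hqtop hq'top).mpr hq3
  have hofq : ENNReal.ofReal q.toReal = q := ENNReal.ofReal_toReal hqtop
  have hofq' : ENNReal.ofReal q'.toReal = q' := ENNReal.ofReal_toReal hq'top
  have hfin := key q.toReal q'.toReal ht0 htt' (by rw [hofq]; exact hq1)
  rw [hofq'] at hfin
  exact absurd hfin (not_le.mpr hq4)
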